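/- The statement M(n)/n → 0 as n → ∞ is equivalent to the statement that the partial sums ∑_{i=1}^{n} μ(i)/i converge to 0 as n → ∞, where M(n) = ∑_{k=1}^{n} μ(k) is the Mertens function. -/

import Mathlib

open ArithmeticFunction Finset Filter

private def Mz (n : ℕ) : ℤ := ∑ k ∈ Finset.Ioc 0 n, moebius k

private noncomputable def mm (n : ℕ) : ℝ := ∑ i ∈ Finset.Ioc 0 n, (moebius i : ℝ) / i

private lemma lemA {N : ℕ} (hN : 1 ≤ N) :
    ∑ n ∈ Finset.Ioc 0 N, (moebius n * (N / n : ℕ) : ℤ) = 1 := by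
  have h1 : ∀ n ∈ Finset.Ioc 0 N, (moebius n * (N / n : ℕ) : ℤ)
      = ∑ x ∈ (Finset.Ioc 0 N).filter (fun x => n ∣ x), moebius n := by
    intro n _
    rw [Finset.sum_const, Nat.Ioc_filter_dvd_card_eq_div, nsmul_eq_mul, mul_comm]
  rw [Finset.sum_congr rfl h1]
  have h2 : ∀ n ∈ Finset.Ioc 0 N,
      (∑ x ∈ (Finset.Ioc 0 N).filter (fun x => n ∣ x), (moebius n : ℤ))
      = ∑ x ∈ Finset.Ioc 0 N, if n ∣ x then (moebius n : ℤ) else 0 := by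
    intro n _; rw [Finset.sum_filter]
  rw [Finset.sum_congr rfl h2, Finset.sum_comm]
  have h3 : ∀ x ∈ Finset.Ioc 0 N,
      (∑ n ∈ Finset.Ioc 0 N, if n ∣ x then (moebius n : ℤ) else 0)
      = if x = 1 then 1 else 0 := by
    intro x hx
    simp only [Finset.mem_Ioc] at hx
    rw [← Finset.sum_filter]
    have hfe : (Finset.Ioc 0 N).filter (fun n => n ∣ x) = x.divisors := by
      ext n
      simp only [Finset.mem_filter, Finset.mem_Ioc, Nat.mem_divisors]
      constructor
      · rintro ⟨_, hd⟩; exact ⟨hd, by omega⟩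
      · rintro ⟨hd, _⟩
        exact ⟨⟨Nat.pos_of_dvd_of_pos hd hx.1, le_trans (Nat.le_of_dvd hx.1 hd) hx.2⟩, hd⟩
    rw [hfe]
    have := coe_mul_zeta_apply (R := ℤ) (f := (moebius : ArithmeticFunction ℤ)) (x := x)
    rw [moebius_mul_coe_zeta] at this
    rw [← this, one_apply]
  rw [Finset.sum_congr rfl h3, Finset.sum_ite_eq' (Finset.Ioc 0 N) 1 (fun _ => (1:ℤ))]
  simp [hN]

private lemma Mz_diff {a b : ℕ} (h : a ≤ b) :
    ∑ n ∈ Finset.Ioc a b, (moebius n : ℤ) = Mz b - Mz a := by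
  have := Finset.sum_Ioc_consecutive (fun k => (moebius k : ℤ)) (Nat.zero_le a) h
  unfold Mz; linarith

private lemma hdiv1 {N n j : ℕ} (hj : 0 < j) (h1 : N / (j+1) < n) (h2 : n ≤ N / j) :
    N / n = j := by
  have hn : 0 < n := lt_of_le_of_lt (Nat.zero_le _) h1
  have ha : j * n ≤ N := by
    have := (Nat.le_div_iff_mul_le hj).1 h2
    linarith [Nat.mul_comm n j]
  have hb : N < n * (j+1) := (Nat.div_lt_iff_lt_mul (by omega)).1 h1
  have h3 : j ≤ N / n := (Nat.le_div_iff_mul_le hn).2 ha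
  have h4 : N / n < j + 1 := (Nat.div_lt_iff_lt_mul hn).2 (by linarith [Nat.mul_comm n (j+1)])
  omega

private lemma lemB (N : ℕ) : ∀ K : ℕ, 1 ≤ K →
    ∑ n ∈ Finset.Ioc (N / K) N, (moebius n * (N / n : ℕ) : ℤ)
      = ∑ j ∈ Finset.Ico 1 K, (Mz (N / j) - Mz (N / (j+1))) * j := by
  intro K
  induction K with
  | zero => omega
  | succ K ih =>
    intro _
    rcases Nat.eq_zero_or_pos K with h1 | hK
    · subst h1; simp [Nat.div_one]
    have hle1 : N / (K+1) ≤ N / K := Nat.div_le_div_left (by omega) (by omega)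
    have hle2 : N / K ≤ N := Nat.div_le_self _ _
    rw [← Finset.sum_Ioc_consecutive _ hle1 hle2, ih hK,
      Finset.sum_Ico_succ_top hK, add_comm]
    congr 1
    have : ∀ n ∈ Finset.Ioc (N / (K+1)) (N / K), (moebius n * (N / n : ℕ) : ℤ)
        = moebius n * K := by
      intro n hn
      simp only [Finset.mem_Ioc] at hn
      rw [hdiv1 (by omega) hn.1 hn.2]
    rw [Finset.sum_congr rfl this, ← Finset.sum_mul, Mz_diff hle1]

private lemma lemC (N : ℕ) : ∀ K : ℕ, 1 ≤ K →
    ∑ j ∈ Finset.Ico 1 K, (Mz (N / j) - Mz (N / (j+1))) * (j : ℤ)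
      = (∑ j ∈ Finset.Ico 1 K, Mz (N / j)) - ((K : ℤ) - 1) * Mz (N / K) := by
  intro K
  induction K with
  | zero => omega
  | succ K ih =>
    intro _
    rcases Nat.eq_zero_or_pos K with h1 | hK
    · subst h1; simp
    rw [Finset.sum_Ico_succ_top hK, Finset.sum_Ico_succ_top hK, ih hK]
    push_cast
    ring

private lemma key {N K : ℕ} (hK : 1 ≤ K) (hN : 1 ≤ N) :
    (N:ℝ) * mm (N/K)
      = (∑ n ∈ Finset.Ioc 0 (N/K), (moebius n : ℝ) * ((N:ℝ)/n - ((N/n : ℕ):ℝ)))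
        + 1 - (∑ j ∈ Finset.Ico 1 K, ((Mz (N/j)):ℝ)) + ((K:ℝ) - 1) * ((Mz (N/K)):ℝ) := by
  have hQ : N / K ≤ N := Nat.div_le_self _ _
  have hint : ∑ n ∈ Finset.Ioc 0 (N/K), (moebius n * (N / n : ℕ) : ℤ)
      = 1 - ((∑ j ∈ Finset.Ico 1 K, Mz (N/j)) - ((K:ℤ)-1) * Mz (N/K)) := by
    have h0 := Finset.sum_Ioc_consecutive (fun n => (moebius n * (N / n : ℕ) : ℤ))
      (Nat.zero_le (N/K)) hQ
    beta_reduce at h0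
    rw [lemA hN, lemB N K hK, lemC N K hK] at h0
    linarith
  have h1 : (N:ℝ) * mm (N/K) = ∑ n ∈ Finset.Ioc 0 (N/K), (moebius n : ℝ) * ((N:ℝ)/n) := by
    unfold mm
    rw [Finset.mul_sum]
    exact Finset.sum_congr rfl fun i _ => by ring
  rw [h1]
  have h2 : ∀ n ∈ Finset.Ioc 0 (N/K), (moebius n : ℝ) * ((N:ℝ)/n)
      = (moebius n : ℝ) * ((N:ℝ)/n - ((N/n:ℕ):ℝ)) + (moebius n : ℝ) * ((N/n:ℕ):ℝ) := by
    intros; ring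
  rw [Finset.sum_congr rfl h2, Finset.sum_add_distrib]
  have h3 : ∑ n ∈ Finset.Ioc 0 (N/K), (moebius n : ℝ) * ((N/n:ℕ):ℝ)
      = ((∑ n ∈ Finset.Ioc 0 (N/K), (moebius n * (N/n:ℕ) : ℤ) : ℤ) : ℝ) := by
    rw [Int.cast_sum]
    exact Finset.sum_congr rfl fun n _ => by rw [Int.cast_mul, Int.cast_natCast]
  rw [h3, hint]
  push_cast
  ring

private lemma mu_abs (n : ℕ) : |(moebius n : ℝ)| ≤ 1 := by
  rcases moebius_eq_or n with h|h|h <;> simp [h]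

private lemma frac_bound {N n : ℕ} (hn : 0 < n) :
    |(N:ℝ)/n - ((N/n : ℕ):ℝ)| ≤ 1 := by
  have hn' : (0:ℝ) < n := by exact_mod_cast hn
  have hlo : ((N/n:ℕ):ℝ) ≤ (N:ℝ)/n := by
    rw [le_div_iff₀ hn']
    exact_mod_cast Nat.div_mul_le_self N n
  have hhi : (N:ℝ)/n ≤ ((N/n:ℕ):ℝ) + 1 := by
    rw [div_le_iff₀ hn']
    have : N < (N/n + 1) * n := (Nat.div_lt_iff_lt_mul hn).1 (Nat.lt_succ_self _)
    have := this.le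
    exact_mod_cast (by push_cast; exact_mod_cast this : (N:ℝ) ≤ ((N/n:ℕ) + 1) * n)
  rw [abs_le]
  constructor <;> linarith

private lemma forward (h : Tendsto (fun n : ℕ => ((Mz n : ℤ):ℝ)/n) atTop (nhds 0)) :
    Tendsto mm atTop (nhds 0) := by
  rw [Metric.tendsto_atTop] at h ⊢
  intro δ hδ
  obtain ⟨K, hK1, hKδ⟩ : ∃ K : ℕ, 1 ≤ K ∧ (6:ℝ)/δ ≤ K := by
    refine ⟨max 1 ⌈(6:ℝ)/δ⌉₊, le_max_left _ _, ?_⟩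
    calc (6:ℝ)/δ ≤ ⌈(6:ℝ)/δ⌉₊ := Nat.le_ceil _
    _ ≤ (max 1 ⌈(6:ℝ)/δ⌉₊ : ℕ) := by exact_mod_cast Nat.le_max_right 1 _
  have hK0 : (0:ℝ) < K := by exact_mod_cast hK1
  set ε : ℝ := δ/(6*K) with hε_def
  have hε : 0 < ε := by positivity
  obtain ⟨T, hT⟩ := h ε hε
  refine ⟨max T 1, fun M hM => ?_⟩
  have hM1 : 1 ≤ M := le_trans (le_max_right T 1) hM
  have hMT : T ≤ M := le_trans (le_max_left T 1) hM
  -- basic setup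
  set N := M * K with hN_def
  have hN1 : 1 ≤ N := Nat.one_le_iff_ne_zero.2 (by positivity)
  have hQ : N / K = M := by
    rw [hN_def]; exact Nat.mul_div_cancel M (by omega)
  -- Mz bound from hT
  have hMzb : ∀ t : ℕ, T ≤ t → 1 ≤ t → |((Mz t : ℤ):ℝ)| ≤ ε * t := by
    intro t ht ht1
    have := hT t ht
    rw [Real.dist_eq, sub_zero] at this
    have ht' : (0:ℝ) < t := by exact_mod_cast ht1
    rw [abs_div] at this
    rw [abs_of_pos ht'] at this
    calc |((Mz t : ℤ):ℝ)| = |((Mz t : ℤ):ℝ)| / t * t := by field_simp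
    _ ≤ ε * t := by nlinarith [abs_nonneg ((Mz t : ℤ):ℝ)]
  have hkey := key hK1 hN1
  rw [hQ] at hkey
  -- bound E
  have hE : |∑ n ∈ Finset.Ioc 0 M, (moebius n : ℝ) * ((N:ℝ)/n - ((N/n : ℕ):ℝ))| ≤ M := by
    calc |∑ n ∈ Finset.Ioc 0 M, (moebius n : ℝ) * ((N:ℝ)/n - ((N/n : ℕ):ℝ))|
        ≤ ∑ n ∈ Finset.Ioc 0 M, |(moebius n : ℝ) * ((N:ℝ)/n - ((N/n : ℕ):ℝ))| :=
          Finset.abs_sum_le_sum_abs _ _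
    _ ≤ ∑ n ∈ Finset.Ioc 0 M, 1 := by
          refine Finset.sum_le_sum fun n hn => ?_
          simp only [Finset.mem_Ioc] at hn
          rw [abs_mul]
          calc |(moebius n : ℝ)| * |(N:ℝ)/n - ((N/n : ℕ):ℝ)|
              ≤ 1 * 1 := mul_le_mul (mu_abs n) (frac_bound hn.1) (abs_nonneg _) zero_le_one
          _ = 1 := one_mul 1
    _ = M := by simp
  -- bound S
  have hS : |∑ j ∈ Finset.Ico 1 K, ((Mz (N/j)):ℝ)| ≤ ε * K * N := by
    calc |∑ j ∈ Finset.Ico 1 K, ((Mz (N/j)):ℝ)|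
        ≤ ∑ j ∈ Finset.Ico 1 K, |((Mz (N/j)):ℝ)| := Finset.abs_sum_le_sum_abs _ _
    _ ≤ ∑ j ∈ Finset.Ico 1 K, ε * N := by
          refine Finset.sum_le_sum fun j hj => ?_
          simp only [Finset.mem_Ico] at hj
          have hj1 : 1 ≤ j := hj.1
          have hdj : M ≤ N / j := by
            rw [← hQ]
            exact Nat.div_le_div_left (by omega) (by omega)
          have h1 : |((Mz (N/j)):ℝ)| ≤ ε * (N/j : ℕ) := hMzb _ (by omega) (by omega)
          have h2 : (N/j : ℕ) ≤ N := Nat.div_le_self _ _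
          have h2' : ((N/j : ℕ):ℝ) ≤ (N:ℝ) := by exact_mod_cast h2
          nlinarith
    _ ≤ ε * K * N := by
          rw [Finset.sum_const, Nat.card_Ico, nsmul_eq_mul]
          have : ((K - 1 : ℕ):ℝ) ≤ (K:ℝ) := by
            have : (K - 1 : ℕ) ≤ K := Nat.sub_le _ _
            exact_mod_cast this
          have hN0 : (0:ℝ) ≤ (N:ℝ) := by positivity
          nlinarith [mul_nonneg hε.le hN0]
  -- bound last term
  have hL : |((K:ℝ) - 1) * ((Mz M):ℝ)| ≤ ε * K * N := by
    rw [abs_mul]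
    have h1 : |((Mz M):ℝ)| ≤ ε * M := hMzb _ hMT hM1
    have hK1r : (1:ℝ) ≤ K := by exact_mod_cast hK1
    have h2 : |(K:ℝ) - 1| ≤ K := by
      rw [abs_le]; constructor <;> linarith
    have hMN : (M:ℝ) ≤ N := by
      have : M ≤ N := by rw [hN_def]; exact Nat.le_mul_of_pos_right M (by omega)
      exact_mod_cast this
    have hM0 : (0:ℝ) ≤ M := by positivity
    calc |(K:ℝ) - 1| * |((Mz M):ℝ)| ≤ (K:ℝ) * (ε * M) :=
          mul_le_mul h2 h1 (abs_nonneg _) hK0.le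
    _ ≤ ε * K * N := by
          nlinarith [mul_nonneg (mul_nonneg hε.le hK0.le) (sub_nonneg.2 hMN)]
  -- combine
  have hNr : (0:ℝ) < N := by exact_mod_cast hN1
  have habs : (N:ℝ) * |mm M| ≤ M + 1 + 2 * (ε * K * N) := by
    have := hkey
    have h0 : |(N:ℝ) * mm M| = (N:ℝ) * |mm M| := by
      rw [abs_mul, abs_of_pos hNr]
    calc (N:ℝ) * |mm M| = |(N:ℝ) * mm M| := h0.symm
    _ = |(∑ n ∈ Finset.Ioc 0 M, (moebius n : ℝ) * ((N:ℝ)/n - ((N/n : ℕ):ℝ)))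
          + 1 - (∑ j ∈ Finset.Ico 1 K, ((Mz (N/j)):ℝ)) + ((K:ℝ) - 1) * ((Mz M):ℝ)| := by
        rw [hkey]
    _ ≤ M + 1 + 2 * (ε * K * N) := by
        have := abs_add_le ((∑ n ∈ Finset.Ioc 0 M, (moebius n : ℝ) * ((N:ℝ)/n - ((N/n : ℕ):ℝ)))
          + 1 - (∑ j ∈ Finset.Ico 1 K, ((Mz (N/j)):ℝ))) (((K:ℝ) - 1) * ((Mz M):ℝ))
        have h3 := abs_sub ((∑ n ∈ Finset.Ioc 0 M, (moebius n : ℝ) * ((N:ℝ)/n - ((N/n : ℕ):ℝ))) + 1)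
          (∑ j ∈ Finset.Ico 1 K, ((Mz (N/j)):ℝ))
        have h4 := abs_add_le (∑ n ∈ Finset.Ioc 0 M, (moebius n : ℝ) * ((N:ℝ)/n - ((N/n : ℕ):ℝ))) (1:ℝ)
        simp only [abs_one] at h4
        linarith
  rw [Real.dist_eq, sub_zero]
  -- final arithmetic: N = M*K, ε = δ/(6K), K ≥ 6/δ, M ≥ 1
  have hMr : (1:ℝ) ≤ M := by exact_mod_cast hM1
  have hNMK : (N:ℝ) = M * K := by rw [hN_def]; push_cast; ring
  have hεK : 2 * (ε * K) = δ / 3 := by rw [hε_def]; field_simp; ring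
  have hKδ' : 6 ≤ (K:ℝ) * δ := by
    rw [div_le_iff₀ hδ] at hKδ; linarith
  -- N |mm M| ≤ M + 1 + (δ/3) N ≤ 2M + (δ/3)N < δ N
  have hfin : (N:ℝ) * |mm M| < (N:ℝ) * δ := by
    have e1 : 2 * (ε * K * N) = δ/3 * N := by rw [← hεK]; ring
    rw [e1] at habs
    nlinarith
  have := (mul_lt_mul_iff_right₀ hNr).1 hfin
  exact this

private lemma Mz_eq (N : ℕ) :
    ((Mz N : ℤ):ℝ) = N * mm N - ∑ i ∈ Finset.range N, mm i := by
  induction N with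
  | zero => simp [Mz, mm]
  | succ N ih =>
    have h1 : Mz (N+1) = Mz N + moebius (N+1) := by
      unfold Mz; rw [Finset.sum_Ioc_succ_top (Nat.zero_le N)]
    have h2 : mm (N+1) = mm N + (moebius (N+1):ℝ)/(N+1) := by
      unfold mm; rw [Finset.sum_Ioc_succ_top (Nat.zero_le N)]; push_cast; ring
    have hne : ((N:ℝ)+1) ≠ 0 := by positivity
    rw [Finset.sum_range_succ, h1, h2]
    push_cast
    field_simp
    linarith [ih]

private lemma backward (h : Tendsto mm atTop (nhds 0)) :
    Tendsto (fun n : ℕ => ((Mz n : ℤ):ℝ)/n) atTop (nhds 0) := by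
  have hc := h.cesaro
  have heq : (fun n : ℕ => ((Mz n : ℤ):ℝ)/n)
      = fun n : ℕ => mm n - (∑ i ∈ Finset.range n, mm i)/n := by
    funext n
    rcases Nat.eq_zero_or_pos n with h0 | h0
    · subst h0; simp [Mz, mm]
    have hn : ((n:ℝ)) ≠ 0 := by positivity
    rw [Mz_eq]
    field_simp
  rw [heq]
  have := h.sub hc
  simpa [div_eq_inv_mul] using this


/-- `M(n)/n → 0` is equivalent to `∑_{i=1}^{n} μ(i)/i → 0`, where `M` is the Mertens
function. -/
theorem mertens_littleO_iff_sum_moebius_div_tendsto_zero :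
    Tendsto (fun n : ℕ => ((∑ k ∈ Finset.Icc 1 n, moebius k : ℤ) : ℝ) / n) atTop (nhds 0) ↔
    Tendsto (fun n : ℕ => ∑ i ∈ Finset.Icc 1 n, (moebius i : ℝ) / i) atTop (nhds 0) := by
  have e1 : (fun n : ℕ => ((∑ k ∈ Finset.Icc 1 n, moebius k : ℤ) : ℝ) / n)
      = fun n : ℕ => ((Mz n : ℤ):ℝ)/n := by
    funext n
    have : Finset.Icc 1 n = Finset.Ioc 0 n := rfl
    rw [Mz, this]
  have e2 : (fun n : ℕ => ∑ i ∈ Finset.Icc 1 n, (moebius i : ℝ) / i) = mm := by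
    funext n
    have : Finset.Icc 1 n = Finset.Ioc 0 n := rfl
    rw [mm, this]
  rw [e1, e2]
  exact ⟨forward, backward⟩
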